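/- There does not exist a complex 3×8 equiangular tight frame. -/

import Mathlib

set_option maxHeartbeats 4000000
open Matrix Complex

lemma cayley3 (M : Matrix (Fin 3) (Fin 3) ℂ) :
    M*M*M - M.trace • (M*M) + (((M.trace)^2 - (M*M).trace)/2) • M - M.det • 1 = 0 := by
  ext i j
  fin_cases i <;> fin_cases j <;>
    simp [Matrix.mul_apply, Matrix.trace, Matrix.det_fin_three, Fin.sum_univ_succ,
      Matrix.one_apply] <;> ring

lemma ch3 (M : Matrix (Fin 3) (Fin 3) ℂ) (c : ℂ) (hc : c ≠ 0)
    (h1 : M.trace = 0) (h2 : M * M = c • 1) : False := by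
  have hCH := cayley3 M
  rw [h1, h2] at hCH
  have htr : ((c • (1:Matrix (Fin 3) (Fin 3) ℂ)).trace) = 3 * c := by
    simp [Matrix.trace_smul, Matrix.trace_one]; ring
  rw [htr, Matrix.smul_mul, one_mul] at hCH
  have key : (-(c/2)) • M = M.det • (1 : Matrix (Fin 3) (Fin 3) ℂ) := by
    have h : c • M - (0:ℂ) • (c • (1:Matrix (Fin 3) (Fin 3) ℂ))
        + (((0:ℂ)^2 - 3*c)/2) • M - M.det • 1 = 0 := hCH
    rw [sub_eq_zero] at h
    rw [← h]
    module
  have htrkey := congrArg Matrix.trace key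
  rw [Matrix.trace_smul, Matrix.trace_smul, h1, Matrix.trace_one, smul_zero] at htrkey
  have hdet : M.det = 0 := by
    have h3 : (M.det) * 3 = 0 := by simpa [smul_eq_mul] using htrkey.symm
    have := mul_eq_zero.mp h3
    rcases this with h | h
    · exact h
    · norm_num at h
  rw [hdet, zero_smul] at key
  have hM0 : M = 0 := by
    rcases smul_eq_zero.mp key with h | h
    · exfalso; apply hc; have : c / 2 = 0 := neg_eq_zero.mp h
      field_simp at this; simpa using this
    · exact h
  rw [hM0, mul_zero] at h2
  have := congrFun (congrFun h2.symm 0) 0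
  simp [Matrix.one_apply] at this
  exact hc this

noncomputable def gm : Fin 8 → Matrix (Fin 3) (Fin 3) ℂ :=
  ![!![0,1,0;1,0,0;0,0,0],
    !![0,-I,0;I,0,0;0,0,0],
    !![1,0,0;0,-1,0;0,0,0],
    !![0,0,1;0,0,0;1,0,0],
    !![0,0,-I;0,0,0;I,0,0],
    !![0,0,0;0,0,1;0,1,0],
    !![0,0,0;0,0,-I;0,I,0],
    !![1,0,0;0,1,0;0,0,-2]]
@[simp] lemma gm0 : gm 0 = !![0,1,0;1,0,0;0,0,0] := rfl
@[simp] lemma gm1 : gm 1 = !![0,-I,0;I,0,0;0,0,0] := rfl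
@[simp] lemma gm2 : gm 2 = !![1,0,0;0,-1,0;0,0,0] := rfl
@[simp] lemma gm3 : gm 3 = !![0,0,1;0,0,0;1,0,0] := rfl
@[simp] lemma gm4 : gm 4 = !![0,0,-I;0,0,0;I,0,0] := rfl
@[simp] lemma gm5 : gm 5 = !![0,0,0;0,0,1;0,1,0] := rfl
@[simp] lemma gm6 : gm 6 = !![0,0,0;0,0,-I;0,I,0] := rfl
@[simp] lemma gm7 : gm 7 = !![1,0,0;0,1,0;0,0,-2] := rfl
def gw : Fin 8 → ℝ := ![2,2,2,2,2,2,2,6]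
lemma gw_pos (a : Fin 8) : 0 < gw a := by fin_cases a <;> norm_num [gw]
@[simp] lemma gw0 : gw 0 = 2 := rfl
@[simp] lemma gw1 : gw 1 = 2 := rfl
@[simp] lemma gw2 : gw 2 = 2 := rfl
@[simp] lemma gw3 : gw 3 = 2 := rfl
@[simp] lemma gw4 : gw 4 = 2 := rfl
@[simp] lemma gw5 : gw 5 = 2 := rfl
@[simp] lemma gw6 : gw 6 = 2 := rfl
@[simp] lemma gw7 : gw 7 = 6 := rfl

lemma gm_trace (a : Fin 8) : (gm a).trace = 0 := by
  fin_cases a <;> simp [Matrix.trace_fin_three, Matrix.vecHead, Matrix.vecTail] <;> ring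

lemma gm_herm (a : Fin 8) : (gm a)ᴴ = gm a := by
  fin_cases a <;> (ext i j; fin_cases i <;> fin_cases j <;>
      simp [Matrix.conjTranspose_apply, Matrix.vecHead, Matrix.vecTail])

lemma gm_casimir :
    (∑ a : Fin 8, ((gw a)⁻¹ : ℂ) • (gm a * gm a)) = (8/3 : ℂ) • 1 := by
  ext i j
  fin_cases i <;> fin_cases j <;>
    simp [Fin.sum_univ_eight, Matrix.mul_apply, Fin.sum_univ_three, Matrix.one_apply,
      Matrix.vecHead, Matrix.vecTail] <;> ring_nf <;>
    simp [Complex.I_sq] <;> ring_nf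

lemma gm_complete (M : Matrix (Fin 3) (Fin 3) ℂ) :
    (∑ a : Fin 8, (((gw a)⁻¹ : ℂ) * (M * gm a).trace) • gm a)
      = M - (M.trace / 3) • 1 := by
  ext i j
  fin_cases i <;> fin_cases j <;>
    simp [Fin.sum_univ_eight, Matrix.mul_apply, Fin.sum_univ_three,
      Matrix.trace_fin_three, Matrix.one_apply, Matrix.vecHead, Matrix.vecTail] <;>
    ring_nf <;> simp [Complex.I_sq] <;> ring_nf


/-- `X` is a complex `d × n` equiangular tight frame: there exist `α, β > 0` such that
every diagonal entry of `XᴴX` equals `1`, the absolute value of every off-diagonal entry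
of `XᴴX` equals `α`, and `XXᴴ = β I`. -/
def IsETF {d n : ℕ} (X : Matrix (Fin d) (Fin n) ℂ) : Prop :=
  ∃ α β : ℝ, 0 < α ∧ 0 < β ∧
    (∀ j, (Xᴴ * X) j j = 1) ∧
    (∀ j k, j ≠ k → ‖(Xᴴ * X) j k‖ = α) ∧
    X * Xᴴ = (β : ℂ) • (1 : Matrix (Fin d) (Fin d) ℂ)

/-- There does not exist a complex `3 × 8` equiangular tight frame. -/
theorem no_three_by_eight_etf :
    ¬ ∃ X : Matrix (Fin 3) (Fin 8) ℂ, IsETF X := by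
  rintro ⟨X, α, β, hα, hβpos, hdiag, hoff, htight⟩
  set G : Matrix (Fin 8) (Fin 8) ℂ := Xᴴ * X with hGdef
  have hGH : Gᴴ = G := by
    rw [hGdef, Matrix.conjTranspose_mul, Matrix.conjTranspose_conjTranspose]
  have hGstar : ∀ j k, G k j = star (G j k) := by
    intro j k
    have := congrFun (congrFun hGH k) j
    rw [Matrix.conjTranspose_apply] at this
    exact this.symm
  -- β = 8/3
  have htrG : G.trace = 8 := by
    have : ∀ j, G j j = 1 := hdiag
    simp [Matrix.trace, Matrix.diag, this]
  have hβ : (β : ℂ) = 8/3 := by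
    have h1 : (X * Xᴴ).trace = G.trace := Matrix.trace_mul_comm X Xᴴ
    rw [htight, htrG] at h1
    have h2 : ((β:ℂ) • (1 : Matrix (Fin 3) (Fin 3) ℂ)).trace = (β:ℂ) * 3 := by
      simp [Matrix.trace_smul, Matrix.trace_one]
    rw [h2] at h1
    field_simp at h1 ⊢
    linear_combination h1
  -- G² = (8/3)G
  have hG2 : G * G = (8/3 : ℂ) • G := by
    calc G * G = Xᴴ * (X * Xᴴ) * X := by
          rw [hGdef, Matrix.mul_assoc, Matrix.mul_assoc, Matrix.mul_assoc]
    _ = Xᴴ * ((β:ℂ) • (1 : Matrix (Fin 3) (Fin 3) ℂ)) * X := by rw [htight]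
    _ = (β:ℂ) • G := by
          rw [Matrix.mul_smul, Matrix.mul_one, Matrix.smul_mul, hGdef]
    _ = (8/3 : ℂ) • G := by rw [hβ]
  -- α² = 5/21
  have hα2 : α^2 = 5/21 := by
    have he := congrFun (congrFun hG2 0) 0
    rw [Matrix.mul_apply, Matrix.smul_apply, hdiag 0, smul_eq_mul, mul_one] at he
    have hterm : ∀ k : Fin 8, G 0 k * G k 0 = ((‖G 0 k‖)^2 : ℝ) := by
      intro k
      rw [hGstar 0 k]
      rw [show star (G 0 k) = (starRingEnd ℂ) (G 0 k) from rfl, Complex.mul_conj]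
      norm_cast
      rw [Complex.sq_norm]
    have hsum : ∀ k : Fin 8, k ≠ 0 → G 0 k * G k 0 = ((α^2 : ℝ) : ℂ) := by
      intro k hk
      rw [hterm k, hoff 0 k (Ne.symm hk)]
    rw [Fin.sum_univ_eight] at he
    rw [hterm 0, hdiag 0] at he
    simp only [norm_one, one_pow] at he
    rw [hsum 1 (by decide), hsum 2 (by decide), hsum 3 (by decide), hsum 4 (by decide),
      hsum 5 (by decide), hsum 6 (by decide), hsum 7 (by decide)] at he
    have : ((1 + 7 * α^2 : ℝ) : ℂ) = ((8/3 : ℝ) : ℂ) := by push_cast at he ⊢; linear_combination he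
    have := Complex.ofReal_inj.mp this
    linarith
  -- column vectors and projections
  set x : Fin 8 → Fin 3 → ℂ := fun j p => X p j with hxdef
  have hGx : ∀ j k, G j k = ∑ p : Fin 3, star (x j p) * x k p := by
    intro j k
    rw [hGdef, Matrix.mul_apply]
    apply Finset.sum_congr rfl
    intro p _
    rw [Matrix.conjTranspose_apply]
  set P : Fin 8 → Matrix (Fin 3) (Fin 3) ℂ :=
    fun j => Matrix.of (fun p q => x j p * star (x j q)) with hPdef
  have hPapp : ∀ j p q, P j p q = x j p * star (x j q) := fun j p q => rfl
  have htrP : ∀ j, (P j).trace = 1 := by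
    intro j
    have h1 : (P j).trace = ∑ p : Fin 3, x j p * star (x j p) := by
      simp [Matrix.trace, Matrix.diag, hPapp]
    have h2 : ∑ p : Fin 3, x j p * star (x j p) = G j j := by
      rw [hGx]; apply Finset.sum_congr rfl; intro p _; ring
    rw [h1, h2, hdiag]
  have hP2 : ∀ j, P j * P j = P j := by
    intro j
    ext p q
    rw [Matrix.mul_apply]
    have h0 : ∀ r : Fin 3, P j p r * P j r q
        = (x j p * star (x j q)) * (star (x j r) * x j r) := by
      intro r; simp only [hPapp]; ring
    rw [Finset.sum_congr rfl (fun r _ => h0 r), ← Finset.mul_sum, ← hGx j j, hdiag j,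
      mul_one, hPapp]
  have htrPP : ∀ j k, (P j * P k).trace = G j k * G k j := by
    intro j k
    have h1 : (P j * P k).trace = ∑ p : Fin 3, ∑ q : Fin 3, P j p q * P k q p := by
      simp [Matrix.trace, Matrix.diag, Matrix.mul_apply]
    rw [h1, hGx, hGx, Finset.sum_mul_sum]
    rw [Finset.sum_comm]
    apply Finset.sum_congr rfl; intro p _
    apply Finset.sum_congr rfl; intro q _
    simp only [hPapp]; ring
  have hsumP : ∑ j : Fin 8, P j = (8/3:ℂ) • 1 := by
    have h1 : ∀ p q, (X * Xᴴ) p q = ∑ j : Fin 8, P j p q := by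
      intro p q
      rw [Matrix.mul_apply]
      apply Finset.sum_congr rfl
      intro j _
      rw [hPapp, Matrix.conjTranspose_apply]
    ext p q
    rw [Matrix.sum_apply] at *
    rw [← h1 p q, htight, hβ]
  set A : Fin 8 → Matrix (Fin 3) (Fin 3) ℂ := fun j => P j - (3⁻¹:ℂ) • 1 with hAdef
  have htrA : ∀ j, (A j).trace = 0 := by
    intro j
    show (P j - (3⁻¹:ℂ) • 1).trace = 0
    rw [Matrix.trace_sub, Matrix.trace_smul, htrP, Matrix.trace_one]
    norm_num
  have hsumA : ∑ j : Fin 8, A j = 0 := by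
    show ∑ j : Fin 8, (P j - (3⁻¹:ℂ) • 1) = 0
    rw [Finset.sum_sub_distrib, hsumP, Finset.sum_const, Finset.card_univ]
    rw [Fintype.card_fin, ← Nat.cast_smul_eq_nsmul ℂ, smul_smul]
    rw [show ((8:ℕ):ℂ) * 3⁻¹ = 8/3 by norm_num]
    exact sub_self _
  have hAmul : ∀ j k, A j * A k
      = P j * P k - (3⁻¹:ℂ) • P j - (3⁻¹:ℂ) • P k + (9⁻¹:ℂ) • 1 := by
    intro j k
    show (P j - (3⁻¹:ℂ) • 1) * (P k - (3⁻¹:ℂ) • 1) = _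
    simp only [Matrix.sub_mul, Matrix.mul_sub, smul_mul_assoc, mul_smul_comm,
      Matrix.one_mul, Matrix.mul_one]
    module
  have htrAA : ∀ j k, (A j * A k).trace = G j k * G k j - 1/3 := by
    intro j k
    rw [hAmul, Matrix.trace_add, Matrix.trace_sub, Matrix.trace_sub, Matrix.trace_smul,
      Matrix.trace_smul, Matrix.trace_smul, htrPP, htrP, htrP, Matrix.trace_one]
    simp only [smul_eq_mul, Fintype.card_fin]
    push_cast
    ring
  have hA2 : ∀ j, A j * A j = (3⁻¹:ℂ) • P j + (9⁻¹:ℂ) • 1 := by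
    intro j
    rw [hAmul, hP2]
    module
  have hsumA2 : ∑ j : Fin 8, (A j * A j) = (16/9:ℂ) • 1 := by
    rw [Finset.sum_congr rfl (fun j _ => hA2 j), Finset.sum_add_distrib,
      ← Finset.smul_sum, hsumP, Finset.sum_const, Finset.card_univ, Fintype.card_fin,
      ← Nat.cast_smul_eq_nsmul ℂ, smul_smul, smul_smul]
    rw [show (3⁻¹:ℂ) * (8/3) = 8/9 by norm_num, show ((8:ℕ):ℂ) * 9⁻¹ = 8/9 by norm_num,
      ← add_smul]
    norm_num
  -- hermiticity
  have hPherm : ∀ j, (P j)ᴴ = P j := by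
    intro j
    ext p q
    rw [Matrix.conjTranspose_apply, hPapp, hPapp]
    simp [mul_comm]
  have hAherm : ∀ j, (A j)ᴴ = A j := by
    intro j
    show (P j - (3⁻¹:ℂ) • 1)ᴴ = P j - (3⁻¹:ℂ) • 1
    rw [Matrix.conjTranspose_sub, Matrix.conjTranspose_smul, Matrix.conjTranspose_one,
      hPherm]
    norm_num
  -- coefficients in the Gell-Mann basis
  set ctr : Fin 8 → Fin 8 → ℂ := fun j a => (A j * gm a).trace with hctrdef
  have hctr_real : ∀ j a, (starRingEnd ℂ) (ctr j a) = ctr j a := by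
    intro j a
    show (starRingEnd ℂ) ((A j * gm a).trace) = (A j * gm a).trace
    have h1 : ((A j * gm a)ᴴ).trace = (starRingEnd ℂ) ((A j * gm a).trace) := by
      rw [Matrix.trace_conjTranspose]
      rfl
    rw [← h1, Matrix.conjTranspose_mul, gm_herm, hAherm, Matrix.trace_mul_comm]
  set C : Fin 8 → Fin 8 → ℝ := fun j a => (ctr j a).re with hCdef
  have hC : ∀ j a, ctr j a = ((C j a : ℝ) : ℂ) := by
    intro j a
    have h := hctr_real j a
    rw [Complex.conj_eq_iff_re] at h
    exact h.symm
  -- expansion of A j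
  have hexp : ∀ j, A j = ∑ a : Fin 8, (((gw a)⁻¹ : ℂ) * ctr j a) • gm a := by
    intro j
    have h := gm_complete (A j)
    rw [htrA j] at h
    simpa using h.symm
  -- Gram identities
  have hGramC : ∀ j k, ∑ a : Fin 8, ((gw a)⁻¹ : ℂ) * ctr k a * ctr j a
      = G j k * G k j - 1/3 := by
    intro j k
    have h1 : A j * A k = ∑ a : Fin 8, (((gw a)⁻¹ : ℂ) * ctr k a) • (A j * gm a) := by
      conv_lhs => rw [show A k = ∑ a : Fin 8, (((gw a)⁻¹ : ℂ) * ctr k a) • gm a from hexp k]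
      rw [Matrix.mul_sum]
      exact Finset.sum_congr rfl fun a _ => (mul_smul_comm _ _ _)
    have h2 := htrAA j k
    rw [h1, Matrix.trace_sum] at h2
    rw [← h2]
    apply Finset.sum_congr rfl
    intro a _
    rw [Matrix.trace_smul]
    simp [smul_eq_mul]
    exact Or.inl rfl
  have hGoffval : ∀ j k, j ≠ k → G j k * G k j = ((5/21 : ℝ) : ℂ) := by
    intro j k hjk
    rw [hGstar j k, show star (G j k) = (starRingEnd ℂ) (G j k) from rfl, Complex.mul_conj]
    rw [← Complex.sq_norm, hoff j k hjk]
    norm_cast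
  have hGramR : ∀ j k, ∑ a : Fin 8, (gw a)⁻¹ * C k a * C j a
      = (if j = k then (2/3 : ℝ) else -2/21) := by
    intro j k
    have h := hGramC j k
    have hcast : ((∑ a : Fin 8, (gw a)⁻¹ * C k a * C j a : ℝ) : ℂ)
        = ∑ a : Fin 8, ((gw a)⁻¹ : ℂ) * ctr k a * ctr j a := by
      push_cast
      apply Finset.sum_congr rfl
      intro a _
      rw [hC k a, hC j a]
    apply Complex.ofReal_inj.mp
    rw [hcast, h]
    by_cases hjk : j = k
    · rw [if_pos hjk, hjk, hdiag k]
      norm_num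
    · rw [if_neg hjk, hGoffval j k hjk]
      push_cast
      ring
  have hcolC : ∀ a, ∑ j : Fin 8, ctr j a = 0 := by
    intro a
    have h1 : ∑ j : Fin 8, (A j * gm a) = (∑ j : Fin 8, A j) * gm a :=
      (Matrix.sum_mul _ _ _).symm
    show ∑ j : Fin 8, (A j * gm a).trace = 0
    rw [← Matrix.trace_sum, h1, hsumA, Matrix.zero_mul, Matrix.trace_zero]
  have hcolR : ∀ a, ∑ j : Fin 8, C j a = 0 := by
    intro a
    apply Complex.ofReal_inj.mp
    push_cast
    rw [Finset.sum_congr rfl (fun j _ => (hC j a).symm), hcolC a]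
  -- 8x8 real matrix algebra
  set CM : Matrix (Fin 8) (Fin 8) ℝ := Matrix.of (fun j a => C j a) with hCM
  have hCMapp : ∀ j a, CM j a = C j a := fun j a => rfl
  set Winv : Matrix (Fin 8) (Fin 8) ℝ := Matrix.diagonal (fun a => (gw a)⁻¹) with hWinv
  set J8 : Matrix (Fin 8) (Fin 8) ℝ := Matrix.of (fun _ _ => 1) with hJ8
  have hGamma : CM * Winv * CMᵀ = (16/21 : ℝ) • 1 - (2/21 : ℝ) • J8 := by
    ext j k
    rw [Matrix.mul_apply]
    have h1 : ∀ a, (CM * Winv) j a = C j a * (gw a)⁻¹ := by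
      intro a; rw [Matrix.mul_diagonal, hCMapp]
    rw [Finset.sum_congr rfl (fun a _ => by rw [h1 a, Matrix.transpose_apply, hCMapp])]
    have h2 : ∑ a : Fin 8, C j a * (gw a)⁻¹ * C k a
        = ∑ a : Fin 8, (gw a)⁻¹ * C j a * C k a := by
      apply Finset.sum_congr rfl; intro a _; ring
    rw [h2]
    have h3 := hGramR k j
    rw [show ((16/21 : ℝ) • (1 : Matrix (Fin 8) (Fin 8) ℝ) - (2/21 : ℝ) • J8) j k
        = (16/21 : ℝ) * (if j = k then 1 else 0) - 2/21 by
      rw [Matrix.sub_apply, Matrix.smul_apply, Matrix.smul_apply, Matrix.one_apply]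
      simp [hJ8]]
    rw [h3]
    by_cases hjk : k = j
    · rw [if_pos hjk, if_pos hjk.symm]; norm_num
    · rw [if_neg hjk, if_neg (Ne.symm hjk)]; norm_num
  have hCJ : CMᵀ * J8 = 0 := by
    ext a j
    rw [Matrix.mul_apply]
    have : ∀ i : Fin 8, CMᵀ a i * J8 i j = C i a := by
      intro i; rw [Matrix.transpose_apply, hCMapp]; simp [hJ8]
    rw [Finset.sum_congr rfl (fun i _ => this i), hcolR a]
    rfl
  set DM : Matrix (Fin 8) (Fin 8) ℝ := CMᵀ * CM with hDM
  have hDWD : DM * Winv * DM = (16/21 : ℝ) • DM := by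
    have h1 : DM * Winv * DM = CMᵀ * (CM * Winv * CMᵀ) * CM := by
      rw [hDM]
      rw [Matrix.mul_assoc, Matrix.mul_assoc, Matrix.mul_assoc, Matrix.mul_assoc,
        Matrix.mul_assoc]
    rw [h1, hGamma]
    simp only [Matrix.mul_sub, Matrix.sub_mul, Matrix.smul_mul, Matrix.mul_smul,
      Matrix.mul_one, Matrix.one_mul]
    rw [show CMᵀ * J8 * CM = 0 from by rw [hCJ, Matrix.zero_mul]]
    rw [smul_zero, sub_zero, hDM]
  have htrWD : (Winv * DM).trace = 16/3 := by
    have h1 : Winv * DM = (Winv * CMᵀ) * CM := by rw [hDM, Matrix.mul_assoc]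
    have h2 : ((Winv * CMᵀ) * CM).trace = (CM * (Winv * CMᵀ)).trace :=
      Matrix.trace_mul_comm _ _
    have h3 : CM * (Winv * CMᵀ) = CM * Winv * CMᵀ := by rw [Matrix.mul_assoc]
    rw [h1, h2, h3, hGamma, Matrix.trace_sub, Matrix.trace_smul, Matrix.trace_smul,
      Matrix.trace_one]
    have h4 : (J8).trace = 8 := by
      simp [Matrix.trace, Matrix.diag, hJ8]
    rw [h4]
    simp [smul_eq_mul]
    norm_num
  set F : Matrix (Fin 8) (Fin 8) ℝ := Matrix.diagonal gw - (21/16 : ℝ) • DM with hF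
  have hWinvDg : Winv * Matrix.diagonal gw = 1 := by
    rw [hWinv, Matrix.diagonal_mul_diagonal]
    rw [show (fun a => (gw a)⁻¹ * gw a) = fun _ => (1:ℝ) from
      funext fun a => inv_mul_cancel₀ (ne_of_gt (gw_pos a))]
    exact Matrix.diagonal_one
  have hDgWinv : Matrix.diagonal gw * Winv = 1 := by
    rw [hWinv, Matrix.diagonal_mul_diagonal]
    rw [show (fun a => gw a * (gw a)⁻¹) = fun _ => (1:ℝ) from
      funext fun a => mul_inv_cancel₀ (ne_of_gt (gw_pos a))]
    exact Matrix.diagonal_one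
  have hFWF : F * Winv * F = F := by
    rw [hF]
    simp only [Matrix.mul_sub, Matrix.sub_mul, Matrix.smul_mul, Matrix.mul_smul, smul_smul]
    rw [hDgWinv, Matrix.one_mul, Matrix.one_mul]
    rw [Matrix.mul_assoc DM Winv (Matrix.diagonal gw), hWinvDg, Matrix.mul_one, hDWD,
      smul_smul]
    module
  have htrWF : (Winv * F).trace = 1 := by
    rw [hF, Matrix.mul_sub, Matrix.mul_smul, hWinvDg, Matrix.trace_sub, Matrix.trace_smul,
      Matrix.trace_one, htrWD]
    simp [smul_eq_mul]
    norm_num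
  have hDsym : ∀ a b, DM a b = DM b a := by
    intro a b
    rw [hDM, Matrix.mul_apply, Matrix.mul_apply]
    apply Finset.sum_congr rfl
    intro j _
    rw [Matrix.transpose_apply, Matrix.transpose_apply]
    ring
  have hFsym : ∀ a b, F a b = F b a := by
    intro a b
    rw [hF]
    rw [Matrix.sub_apply, Matrix.sub_apply, Matrix.smul_apply, Matrix.smul_apply,
      hDsym a b]
    by_cases hab : a = b
    · rw [hab]
    · rw [Matrix.diagonal_apply_ne _ hab, Matrix.diagonal_apply_ne' _ hab]
  -- entrywise versions
  have hFWFe : ∀ a b, ∑ e : Fin 8, F a e * (gw e)⁻¹ * F e b = F a b := by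
    intro a b
    have h := congrFun (congrFun hFWF a) b
    rw [Matrix.mul_apply] at h
    rw [← h]
    apply Finset.sum_congr rfl
    intro e _
    rw [Matrix.mul_diagonal]
  have hFWFe' : ∀ a b, ∑ e : Fin 8, F e a * (gw e)⁻¹ * F e b = F a b := by
    intro a b
    rw [← hFWFe a b]
    apply Finset.sum_congr rfl
    intro e _
    rw [hFsym e a]
  have htrWFe : ∑ a : Fin 8, (gw a)⁻¹ * F a a = 1 := by
    rw [← htrWF]
    rw [show (Winv * F).trace = ∑ a : Fin 8, (Winv * F) a a from rfl]
    apply Finset.sum_congr rfl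
    intro a _
    rw [hWinv, Matrix.diagonal_mul]
  obtain ⟨a0, hδ⟩ : ∃ a0 : Fin 8, F a0 a0 ≠ 0 := by
    by_contra h
    push_neg at h
    rw [Finset.sum_congr rfl (fun a _ => by rw [h a, mul_zero])] at htrWFe
    simp at htrWFe
  -- rank-one structure of F
  set q : Fin 8 → Fin 8 → ℝ := fun a b => F a b - F a a0 * F b a0 / F a0 a0 with hqdef
  have hqapp : ∀ a b, q a b = F a b - F a a0 * F b a0 / F a0 a0 := fun a b => rfl
  have hqsym : ∀ a b, q a b = q b a := by
    intro a b
    rw [hqapp, hqapp, hFsym a b]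
    ring
  have hqWq : ∀ a b, ∑ e : Fin 8, q a e * (gw e)⁻¹ * q e b = q a b := by
    intro a b
    have hterm : ∀ e : Fin 8, q a e * (gw e)⁻¹ * q e b
        = (F a e * (gw e)⁻¹ * F e b)
          - (F a e * (gw e)⁻¹ * F e a0) * (F b a0 / F a0 a0)
          - (F a a0 / F a0 a0) * (F e a0 * (gw e)⁻¹ * F e b)
          + ((F a a0 / F a0 a0) * (F b a0 / F a0 a0)) * (F e a0 * (gw e)⁻¹ * F e a0) := by
      intro e
      rw [hqapp, hqapp]
      ring
    rw [Finset.sum_congr rfl (fun e _ => hterm e)]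
    rw [Finset.sum_add_distrib, Finset.sum_sub_distrib, Finset.sum_sub_distrib,
      ← Finset.sum_mul, ← Finset.mul_sum, ← Finset.mul_sum]
    rw [hFWFe a b, hFWFe a a0, hFWFe' a0 b, hFWFe' a0 a0]
    rw [hqapp, hFsym a0 b]
    field_simp
    ring
  have htrq : ∑ a : Fin 8, (gw a)⁻¹ * q a a = 0 := by
    have hterm : ∀ a : Fin 8, (gw a)⁻¹ * q a a
        = (gw a)⁻¹ * F a a - (F a a0 * (gw a)⁻¹ * F a a0) / F a0 a0 := by
      intro a
      rw [hqapp]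
      ring
    rw [Finset.sum_congr rfl (fun a _ => hterm a), Finset.sum_sub_distrib, htrWFe,
      ← Finset.sum_div]
    rw [show ∑ a : Fin 8, F a a0 * (gw a)⁻¹ * F a a0 = F a0 a0 from by
      rw [← hFWFe' a0 a0]]
    field_simp
    norm_num
  have hq0 : ∀ a b, q a b = 0 := by
    have hnn : ∀ a b : Fin 8, 0 ≤ ((gw a)⁻¹ * q a b) * ((gw b)⁻¹ * q b a) := by
      intro a b
      rw [← hqsym a b]
      have h1 : ((gw a)⁻¹ * q a b) * ((gw b)⁻¹ * q a b)
          = ((gw a)⁻¹ * (gw b)⁻¹) * (q a b * q a b) := by ring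
      rw [h1]
      exact mul_nonneg (mul_nonneg (inv_nonneg.mpr (le_of_lt (gw_pos a)))
        (inv_nonneg.mpr (le_of_lt (gw_pos b)))) (mul_self_nonneg _)
    have hT : ∑ a : Fin 8, ∑ b : Fin 8, ((gw a)⁻¹ * q a b) * ((gw b)⁻¹ * q b a) = 0 := by
      have hinner : ∀ a : Fin 8,
          ∑ b : Fin 8, ((gw a)⁻¹ * q a b) * ((gw b)⁻¹ * q b a)
            = (gw a)⁻¹ * q a a := by
        intro a
        rw [show ∑ b : Fin 8, ((gw a)⁻¹ * q a b) * ((gw b)⁻¹ * q b a)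
            = (gw a)⁻¹ * ∑ b : Fin 8, q a b * (gw b)⁻¹ * q b a from by
          rw [Finset.mul_sum]; apply Finset.sum_congr rfl; intro b _; ring]
        rw [hqWq a a]
      rw [Finset.sum_congr rfl (fun a _ => hinner a), htrq]
    intro a b
    have hzero : ((gw a)⁻¹ * q a b) * ((gw b)⁻¹ * q b a) = 0 := by
      have houter := (Finset.sum_eq_zero_iff_of_nonneg
        (fun a _ => Finset.sum_nonneg (fun b _ => hnn a b))).mp hT a (Finset.mem_univ a)
      exact (Finset.sum_eq_zero_iff_of_nonneg (fun b _ => hnn a b)).mp houter b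
        (Finset.mem_univ b)
    rw [← hqsym a b] at hzero
    have h1 : ((gw a)⁻¹ * (gw b)⁻¹) * (q a b * q a b) = 0 := by
      rw [← hzero]; ring
    rcases mul_eq_zero.mp h1 with h | h
    · exfalso
      rcases mul_eq_zero.mp h with h' | h' <;>
        exact absurd h' (inv_ne_zero (ne_of_gt (gw_pos _)))
    · exact mul_self_eq_zero.mp h
  have hFab : ∀ a b, F a a0 * F b a0 = F a0 a0 * F a b := by
    intro a b
    have h := hq0 a b
    rw [hqapp] at h
    have h2 : F a a0 * F b a0 / F a0 a0 = F a b := by linarith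
    field_simp at h2
    linarith [h2]
  -- final assembly
  have hmulsum : ∀ (c d : Fin 8 → ℂ),
      (∑ a : Fin 8, c a • gm a) * (∑ b : Fin 8, d b • gm b)
        = ∑ a : Fin 8, ∑ b : Fin 8, (c a * d b) • (gm a * gm b) := by
    intro c d
    rw [Matrix.sum_mul]
    apply Finset.sum_congr rfl; intro a _
    rw [smul_mul_assoc, Matrix.mul_sum, Finset.smul_sum]
    apply Finset.sum_congr rfl; intro b _
    rw [mul_smul_comm, smul_smul]
  have hFentry : ∀ a b, F a b = (if a = b then gw a else 0) - 21/16 * DM a b := by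
    intro a b
    rw [hF, Matrix.sub_apply, Matrix.smul_apply, Matrix.diagonal_apply, smul_eq_mul]
  have hDMe : ∀ a b, DM a b = ∑ j : Fin 8, C j a * C j b := by
    intro a b
    rw [hDM, Matrix.mul_apply]
    apply Finset.sum_congr rfl; intro j _
    rw [Matrix.transpose_apply, hCMapp, hCMapp]
  have hsreal : ∀ a b, (F a a0 / gw a) * (F b a0 / gw b)
      = F a0 a0 * ((if a = b then (gw a)⁻¹ else 0)
          - 21/16 * ((gw a)⁻¹ * (gw b)⁻¹ * DM a b)) := by
    intro a b
    have hga := ne_of_gt (gw_pos a)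
    have hgb := ne_of_gt (gw_pos b)
    rw [div_mul_div_comm, hFab a b, hFentry a b]
    by_cases hab : a = b
    · subst hab
      rw [if_pos rfl, if_pos rfl]
      field_simp
    · rw [if_neg hab, if_neg hab]
      field_simp
      ring
  set n : Matrix (Fin 3) (Fin 3) ℂ :=
    ∑ a : Fin 8, ((F a a0 / gw a : ℝ) : ℂ) • gm a with hn
  have htrn : n.trace = 0 := by
    rw [hn, Matrix.trace_sum]
    rw [Finset.sum_congr rfl
      (fun a _ => by rw [Matrix.trace_smul, gm_trace, smul_zero] :
        ∀ a ∈ Finset.univ, ((((F a a0 / gw a : ℝ) : ℂ)) • gm a).trace = 0)]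
    exact Finset.sum_const_zero
  -- Part 1 : the diagonal part
  have hpart1 : ∑ a : Fin 8, ∑ b : Fin 8,
      (((F a0 a0 : ℝ) : ℂ) * (((if a = b then (gw a)⁻¹ else 0) : ℝ) : ℂ)) • (gm a * gm b)
        = ((F a0 a0 : ℝ) : ℂ) • ((8/3 : ℂ) • 1) := by
    have hinner : ∀ a : Fin 8, ∑ b : Fin 8,
        (((F a0 a0 : ℝ) : ℂ) * (((if a = b then (gw a)⁻¹ else 0) : ℝ) : ℂ)) • (gm a * gm b)
          = ((F a0 a0 : ℝ) : ℂ) • (((gw a)⁻¹ : ℂ) • (gm a * gm a)) := by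
      intro a
      rw [Finset.sum_eq_single a]
      · rw [if_pos rfl, ← smul_smul]
        congr 1
        rw [Complex.ofReal_inv]
      · intro b _ hba
        rw [if_neg (Ne.symm hba)]
        simp
      · intro h
        exact absurd (Finset.mem_univ a) h
    rw [Finset.sum_congr rfl (fun a _ => hinner a), ← Finset.smul_sum, gm_casimir]
  -- Part 2 : the DM part
  have hAA : ∀ j : Fin 8, A j * A j
      = ∑ a : Fin 8, ∑ b : Fin 8,
          ((((gw a)⁻¹ : ℂ) * ctr j a) * (((gw b)⁻¹ : ℂ) * ctr j b)) • (gm a * gm b) := by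
    intro j
    conv_lhs => rw [hexp j]
    exact hmulsum _ _
  have hpart2 : ∑ a : Fin 8, ∑ b : Fin 8,
      (((F a0 a0 : ℝ) : ℂ)
        * ((21/16 * ((gw a)⁻¹ * (gw b)⁻¹ * DM a b) : ℝ) : ℂ)) • (gm a * gm b)
        = ((F a0 a0 : ℝ) : ℂ) • ((21/16 : ℂ) • ((16/9 : ℂ) • 1)) := by
    have hterm : ∀ a b : Fin 8,
        (((F a0 a0 : ℝ) : ℂ)
          * ((21/16 * ((gw a)⁻¹ * (gw b)⁻¹ * DM a b) : ℝ) : ℂ)) • (gm a * gm b)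
        = ∑ j : Fin 8, ((((F a0 a0 : ℝ) : ℂ) * (21/16 : ℂ))
            * ((((gw a)⁻¹ : ℂ) * ctr j a) * (((gw b)⁻¹ : ℂ) * ctr j b))) • (gm a * gm b) := by
      intro a b
      rw [← Finset.sum_smul]
      congr 1
      rw [hDMe a b]
      push_cast
      simp only [Finset.mul_sum]
      apply Finset.sum_congr rfl
      intro j _
      rw [hC j a, hC j b]
      push_cast
      ring
    rw [Finset.sum_congr rfl (fun a _ => Finset.sum_congr rfl (fun b _ => hterm a b))]
    have hswap : ∑ a : Fin 8, ∑ b : Fin 8, ∑ j : Fin 8,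
        ((((F a0 a0 : ℝ) : ℂ) * (21/16 : ℂ))
          * ((((gw a)⁻¹ : ℂ) * ctr j a) * (((gw b)⁻¹ : ℂ) * ctr j b))) • (gm a * gm b)
        = ∑ j : Fin 8, ∑ a : Fin 8, ∑ b : Fin 8,
          ((((F a0 a0 : ℝ) : ℂ) * (21/16 : ℂ))
            * ((((gw a)⁻¹ : ℂ) * ctr j a) * (((gw b)⁻¹ : ℂ) * ctr j b))) • (gm a * gm b) := by
      rw [Finset.sum_congr rfl (fun a (_ : a ∈ Finset.univ) => Finset.sum_comm)]
      exact Finset.sum_comm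
    rw [hswap]
    have hj : ∀ j : Fin 8, ∑ a : Fin 8, ∑ b : Fin 8,
        ((((F a0 a0 : ℝ) : ℂ) * (21/16 : ℂ))
          * ((((gw a)⁻¹ : ℂ) * ctr j a) * (((gw b)⁻¹ : ℂ) * ctr j b))) • (gm a * gm b)
        = (((F a0 a0 : ℝ) : ℂ) * (21/16 : ℂ)) • (A j * A j) := by
      intro j
      have h1 : ∀ a b : Fin 8,
          ((((F a0 a0 : ℝ) : ℂ) * (21/16 : ℂ))
            * ((((gw a)⁻¹ : ℂ) * ctr j a) * (((gw b)⁻¹ : ℂ) * ctr j b))) • (gm a * gm b)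
          = (((F a0 a0 : ℝ) : ℂ) * (21/16 : ℂ))
              • (((((gw a)⁻¹ : ℂ) * ctr j a) * (((gw b)⁻¹ : ℂ) * ctr j b)) • (gm a * gm b)) :=
        fun a b => (smul_smul _ _ _).symm
      rw [Finset.sum_congr rfl (fun a (_ : a ∈ Finset.univ) =>
        Finset.sum_congr rfl (fun b (_ : b ∈ Finset.univ) => h1 a b))]
      rw [Finset.sum_congr rfl (fun a (_ : a ∈ Finset.univ) =>
        (Finset.smul_sum).symm), ← Finset.smul_sum, ← hAA j]
    rw [Finset.sum_congr rfl (fun j _ => hj j), ← Finset.smul_sum, hsumA2, ← smul_smul]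
  -- the square of n
  have hnn : n * n = ((F a0 a0 / 3 : ℝ) : ℂ) • 1 := by
    rw [hn, hmulsum]
    have hterm2 : ∀ a b : Fin 8,
        (((F a a0 / gw a : ℝ) : ℂ) * ((F b a0 / gw b : ℝ) : ℂ)) • (gm a * gm b)
        = (((F a0 a0 : ℝ) : ℂ) * (((if a = b then (gw a)⁻¹ else 0) : ℝ) : ℂ)) • (gm a * gm b)
          - (((F a0 a0 : ℝ) : ℂ)
              * ((21/16 * ((gw a)⁻¹ * (gw b)⁻¹ * DM a b) : ℝ) : ℂ)) • (gm a * gm b) := by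
      intro a b
      rw [← sub_smul]
      congr 1
      rw [← Complex.ofReal_mul, hsreal a b]
      push_cast
      ring
    rw [Finset.sum_congr rfl (fun a _ => Finset.sum_congr rfl (fun b _ => hterm2 a b))]
    rw [Finset.sum_congr rfl (fun a _ => Finset.sum_sub_distrib _ _), Finset.sum_sub_distrib]
    rw [hpart1, hpart2]
    simp only [smul_smul]
    rw [← sub_smul]
    congr 1
    push_cast
    ring
  -- contradiction
  exact ch3 n ((F a0 a0 / 3 : ℝ) : ℂ)
    (Complex.ofReal_ne_zero.mpr (div_ne_zero hδ (by norm_num))) htrn hnn
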